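/- Let N ≥ 0, ℓ̂ ≥ 0, p ≥ 0, r ≥ 1 and v > 0 be real numbers, and let (C_t)_{t≥0} be a sequence of nonnegative real numbers with C₀ ≤ N and C_t ≤ (1 + r/v)·C_{t−1}/r + (1 + (v+1)/r)·(p/r^{t−1})·ℓ̂ for every t ≥ 1. Then for every t ≥ 0 it holds that C_t ≤ (1 + r/v)^t · ( N/r^t + t·(1 + (v+1)/r)·(p/r^{t−1})·ℓ̂ ). -/
import Mathlib


/-- **Multi-level character bucket-size recurrence.**
If `C 0 ≤ N` and
`C t ≤ (1 + r/v)·C (t−1)/r + (1 + (v+1)/r)·(p/r^(t−1))·lhat` for all `t ≥ 1`,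
then `C t ≤ (1 + r/v)^t · (N/r^t + t·(1 + (v+1)/r)·(p/r^(t−1))·lhat)`
for every `t ≥ 0`. -/
theorem character_bucket_recurrence (N lhat p r v : ℝ)
    (hN : 0 ≤ N) (hlhat : 0 ≤ lhat) (hp : 0 ≤ p) (hr : 1 ≤ r) (hv : 0 < v)
    (C : ℕ → ℝ) (hCnonneg : ∀ t, 0 ≤ C t)
    (hC0 : C 0 ≤ N)
    (hCrec : ∀ t : ℕ, 1 ≤ t →
      C t ≤ (1 + r / v) * C (t - 1) / r + (1 + (v + 1) / r) * (p / r ^ (t - 1)) * lhat) :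
    ∀ t : ℕ, C t ≤ (1 + r / v) ^ t *
      (N / r ^ t + (t : ℝ) * (1 + (v + 1) / r) * (p / r ^ (t - 1)) * lhat) := by
  have hr0 : (0:ℝ) < r := lt_of_lt_of_le one_pos hr
  have hrne : r ≠ 0 := ne_of_gt hr0
  have ha1 : (1:ℝ) ≤ 1 + r / v := by
    have : 0 < r / v := div_pos hr0 hv
    linarith
  have ha0 : (0:ℝ) < 1 + r / v := lt_of_lt_of_le one_pos ha1
  have hb0 : (0:ℝ) ≤ 1 + (v + 1) / r := by positivity
  intro t
  induction t with
  | zero => simpa using hC0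
  | succ n ih =>
    have hrec := hCrec (n+1) (Nat.le_add_left 1 n)
    simp only [Nat.add_sub_cancel] at hrec
    have hkey : (n:ℝ) * (1 + (v + 1) / r) * (p / r ^ (n-1)) * lhat / r
        = (n:ℝ) * (1 + (v + 1) / r) * (p / r ^ n) * lhat := by
      cases n with
      | zero => simp
      | succ m =>
        simp only [Nat.add_sub_cancel]
        rw [pow_succ, ← div_div]
        ring
    have han : (0:ℝ) < (1 + r / v) ^ (n+1) := pow_pos ha0 _
    have han1 : (1:ℝ) ≤ (1 + r / v) ^ (n+1) := one_le_pow₀ ha1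
    have h1 : (1 + r / v) * C n / r
        ≤ (1 + r / v) ^ (n+1) * (N / r ^ (n+1) + (n:ℝ) * (1 + (v + 1) / r) * (p / r ^ n) * lhat) := by
      have hmul : (1 + r / v) * C n / r
          ≤ (1 + r / v) * ((1 + r / v) ^ n * (N / r ^ n + (n:ℝ) * (1 + (v + 1) / r) * (p / r ^ (n-1)) * lhat)) / r := by
        gcongr
      refine hmul.trans_eq ?_
      rw [← hkey, pow_succ]
      field_simp
      ring
    have h2 : (1 + (v + 1) / r) * (p / r ^ n) * lhat
        ≤ (1 + r / v) ^ (n+1) * ((1 + (v + 1) / r) * (p / r ^ n) * lhat) := by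
      have hnn : (0:ℝ) ≤ (1 + (v + 1) / r) * (p / r ^ n) * lhat := by positivity
      nlinarith
    have hsum := add_le_add h1 h2
    have hgoal : C (n+1) ≤ (1 + r / v) ^ (n+1) *
        (N / r ^ (n+1) + ((n:ℝ)+1) * (1 + (v + 1) / r) * (p / r ^ n) * lhat) := by
      calc C (n+1) ≤ _ := hrec
        _ ≤ _ := hsum
        _ = _ := by ring
    simpa [Nat.add_sub_cancel] using hgoal
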